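/- arXiv:0912.1968 — 2 statements merged into one kernel-verified Lean document; each statement's English description precedes it below -/
import Mathlib

section
/- Let $\lambda, \mu_1, \dots, \mu_m \in \mathbb{C}$, $h > 0$, $\theta \in [0,1]$ with $1 - \theta h \lambda \neq 0$, and define $a = 1 + \tfrac{h\lambda}{1-\theta h \lambda}$ and $b_r = \tfrac{\sqrt{h}\,\mu_r}{1-\theta h \lambda}$. Then the inequality $|a|^2 + \sum_{r=1}^m |b_r|^2 < 1$ holds if and only if $\mathrm{Re}(\lambda) + \tfrac{1}{2}\sum_{r=1}^m |\mu_r|^2 + \tfrac{1}{2} h (1 - 2\theta)|\lambda|^2 < 0$. -/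
theorem theta_maruyama_stability_condition
    (m : ℕ) (lam : ℂ) (mu : Fin m → ℂ) (h θ : ℝ)
    (hh : 0 < h) (hθ : θ ∈ Set.Icc (0 : ℝ) 1)
    (hne : 1 - (θ : ℂ) * (h : ℂ) * lam ≠ 0)
    (a : ℂ) (ha : a = 1 + (h : ℂ) * lam / (1 - (θ : ℂ) * (h : ℂ) * lam))
    (b : Fin m → ℂ)
    (hb : ∀ r, b r = (Real.sqrt h : ℂ) * mu r / (1 - (θ : ℂ) * (h : ℂ) * lam)) :
    (‖a‖ ^ 2 + ∑ r, ‖b r‖ ^ 2 < 1) ↔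
      (lam.re + (1 / 2) * ∑ r, ‖mu r‖ ^ 2
        + (1 / 2) * h * (1 - 2 * θ) * ‖lam‖ ^ 2 < 0) := by
  set d : ℂ := 1 - (θ : ℂ) * (h : ℂ) * lam with hd
  have hD : 0 < Complex.normSq d := Complex.normSq_pos.mpr hne
  have ha' : ‖a‖ ^ 2
      = Complex.normSq ((1 : ℂ) + ((1 - θ : ℝ) : ℂ) * (h : ℂ) * lam) / Complex.normSq d := by
    have : a = ((1 : ℂ) + ((1 - θ : ℝ) : ℂ) * (h : ℂ) * lam) / d := by
      rw [ha]
      field_simp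
      push_cast
      ring
    rw [this, Complex.sq_norm, Complex.normSq_div]
  have hb' : ∀ r, ‖b r‖ ^ 2 = h * Complex.normSq (mu r) / Complex.normSq d := by
    intro r
    rw [hb r, Complex.sq_norm, Complex.normSq_div, Complex.normSq_mul,
      Complex.normSq_ofReal, Real.mul_self_sqrt hh.le]
  have hsum : ∑ r, ‖b r‖ ^ 2
      = (h * ∑ r, Complex.normSq (mu r)) / Complex.normSq d := by
    rw [Finset.mul_sum, Finset.sum_div]
    exact Finset.sum_congr rfl fun r _ => hb' r
  have hmu : ∀ r, ‖mu r‖ ^ 2 = Complex.normSq (mu r) := fun r => Complex.sq_norm _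
  rw [ha', hsum, ← add_div, div_lt_one hD,
    Finset.sum_congr rfl fun r _ => hmu r, Complex.sq_norm]
  set S : ℝ := ∑ r, Complex.normSq (mu r)
  simp only [Complex.normSq_apply, hd, Complex.sub_re, Complex.sub_im, Complex.add_re,
    Complex.add_im, Complex.mul_re, Complex.mul_im, Complex.one_re, Complex.one_im,
    Complex.ofReal_re, Complex.ofReal_im]
  constructor <;> intro H <;> nlinarith [hh, sq_nonneg lam.re, sq_nonneg lam.im,
    mul_pos hh hh]
end

section
/- Let $\lambda, \mu_1, \dots, \mu_m \in \mathbb{C}$, $h > 0$, $\theta \geq 0$ with $1 - \theta h\lambda \neq 0$. Define $a = 1 + \tfrac{h\lambda}{1-\theta h\lambda}$, $b_r = \tfrac{\sqrt{h}\mu_r}{1-\theta h\lambda}$, $c_{r_1,r_2} = \tfrac{\tfrac12 h \mu_{r_1}\mu_{r_2}}{1-\theta h\lambda}$, and $c_{\mathrm{sum}} = \sum_{r_1\neq r_2} c_{r_1,r_2}$. Then $|a|^2 + \sum_{r=1}^m |b_r|^2 + 2\sum_{r=1}^m |c_{r,r}|^2 + |c_{\mathrm{sum}}|^2 < 1$ holds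 if and only if $\mathrm{Re}(\lambda) + \tfrac12 \sum_{r=1}^m |\mu_r|^2 + \tfrac12 h(1-2\theta)|\lambda|^2 + \tfrac14 h \sum_{r=1}^m |\mu_r|^4 + \tfrac18 h\,\big|\sum_{r_1\neq r_2} \mu_{r_1}\mu_{r_2}\big|^2 < 0$. -/
theorem theta_milstein_stability_condition
    (m : ℕ) (lam : ℂ) (mu : Fin m → ℂ) (h θ : ℝ)
    (hh : 0 < h) (hθ : 0 ≤ θ)
    (hne : 1 - (θ : ℂ) * (h : ℂ) * lam ≠ 0)
    (a : ℂ) (ha : a = 1 + (h : ℂ) * lam / (1 - (θ : ℂ) * (h : ℂ) * lam))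
    (b : Fin m → ℂ)
    (hb : ∀ r, b r = (Real.sqrt h : ℂ) * mu r / (1 - (θ : ℂ) * (h : ℂ) * lam))
    (c : Fin m → Fin m → ℂ)
    (hc : ∀ r₁ r₂, c r₁ r₂ = (1 / 2 : ℂ) * (h : ℂ) * mu r₁ * mu r₂
        / (1 - (θ : ℂ) * (h : ℂ) * lam))
    (csum : ℂ)
    (hcsum : csum = ∑ p ∈ Finset.univ.filter (fun p : Fin m × Fin m => p.1 ≠ p.2),
        c p.1 p.2) :
    (‖a‖ ^ 2 + ∑ r, ‖b r‖ ^ 2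
        + 2 * ∑ r, ‖c r r‖ ^ 2 + ‖csum‖ ^ 2 < 1) ↔
      (lam.re + (1 / 2) * ∑ r, ‖mu r‖ ^ 2
        + (1 / 2) * h * (1 - 2 * θ) * ‖lam‖ ^ 2
        + (1 / 4) * h * ∑ r, ‖mu r‖ ^ 4
        + (1 / 8) * h * ‖∑ p ∈ Finset.univ.filter
            (fun p : Fin m × Fin m => p.1 ≠ p.2), mu p.1 * mu p.2‖ ^ 2 < 0) := by
  set d : ℂ := 1 - (θ : ℂ) * (h : ℂ) * lam with hd
  have hDpos : 0 < ‖d‖ ^ 2 := pow_pos (norm_pos_iff.mpr hne) 2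
  set D : ℝ := ‖d‖ ^ 2 with hDdef
  set P : ℝ := ∑ r, ‖mu r‖ ^ 2 with hP
  set Q : ℝ := ∑ r, ‖mu r‖ ^ 4 with hQ
  set S : ℂ := ∑ p ∈ Finset.univ.filter (fun p : Fin m × Fin m => p.1 ≠ p.2),
      mu p.1 * mu p.2 with hS
  set SA : ℝ := ‖S‖ ^ 2 with hSA
  set L : ℝ := ‖lam‖ ^ 2 with hL
  have ha2 : ‖a‖ ^ 2 = ‖d + (h : ℂ) * lam‖ ^ 2 / D := by
    have haa : a = (d + (h : ℂ) * lam) / d := by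
      rw [ha]; field_simp
    rw [haa, norm_div, div_pow]
  have hb2 : ∑ r, ‖b r‖ ^ 2 = h * P / D := by
    have hstep : ∀ r, ‖b r‖ ^ 2 = h * ‖mu r‖ ^ 2 / D := by
      intro r
      rw [hb r, norm_div, norm_mul, Complex.norm_real, Real.norm_eq_abs,
        abs_of_nonneg (Real.sqrt_nonneg h), div_pow, mul_pow, Real.sq_sqrt hh.le]
    rw [Finset.sum_congr rfl (fun r _ => hstep r), ← Finset.sum_div, ← Finset.mul_sum]
  have habsh : ‖(h : ℂ)‖ = h := by
    rw [Complex.norm_real, Real.norm_eq_abs, abs_of_pos hh]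
  have habshalf : ‖(1 / 2 : ℂ)‖ = 1 / 2 := by
    rw [norm_div, norm_one, Complex.norm_two]
  have hc2 : ∑ r, ‖c r r‖ ^ 2 = h ^ 2 / 4 * Q / D := by
    have hstep : ∀ r, ‖c r r‖ ^ 2
        = h ^ 2 / 4 * ‖mu r‖ ^ 4 / D := by
      intro r
      rw [hc r r, norm_div, norm_mul, norm_mul, norm_mul, habsh, habshalf, div_pow]
      ring
    rw [Finset.sum_congr rfl (fun r _ => hstep r), ← Finset.sum_div, ← Finset.mul_sum]
  have hcs : csum = (1 / 2 : ℂ) * (h : ℂ) / d * S := by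
    rw [hcsum, hS, Finset.mul_sum]
    exact Finset.sum_congr rfl fun p _ => by rw [hc p.1 p.2]; ring
  have hcs2 : ‖csum‖ ^ 2 = h ^ 2 / 4 * SA / D := by
    rw [hcs, norm_mul, norm_div, norm_mul, habsh, habshalf]
    rw [hSA]
    ring
  rw [ha2, hb2, hc2, hcs2]
  have hcomb : ‖d + (h : ℂ) * lam‖ ^ 2 / D + h * P / D
      + 2 * (h ^ 2 / 4 * Q / D) + h ^ 2 / 4 * SA / D
      = (‖d + (h : ℂ) * lam‖ ^ 2 + h * P + h ^ 2 / 2 * Q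
        + h ^ 2 / 4 * SA) / D := by ring
  rw [hcomb, div_lt_one hDpos]
  have key : ‖d + (h : ℂ) * lam‖ ^ 2
      = D + 2 * h * lam.re + h ^ 2 * (1 - 2 * θ) * L := by
    rw [hDdef, hL, hd]
    simp only [Complex.sq_norm, Complex.normSq_apply, Complex.add_re, Complex.add_im,
      Complex.sub_re, Complex.sub_im, Complex.one_re, Complex.one_im, Complex.mul_re,
      Complex.mul_im, Complex.ofReal_re, Complex.ofReal_im]
    ring
  rw [key]
  constructor
  · intro H
    by_contra h'
    push_neg at h'
    nlinarith
  · intro H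
    by_contra h'
    push_neg at h'
    nlinarith
end
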